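/- Let a, b, c be pairwise relatively prime integers with 2 ≤ a < b < c, and let S = ⟨ab, ac, bc⟩ be the numerical semigroup generated by ab, ac, bc. Then the Frobenius number of S (the largest integer not in S) is 2abc − (ab + ac + bc). -/

import Mathlib

/-- Two-generator Chicken McNugget: every number above the Frobenius number
of coprime `b, c` is representable. -/
lemma two_gen_rep {b c : ℕ} (hb : 1 < b) (hc : 1 < c) (cop : Nat.Coprime b c)
    {m : ℕ} (hm : b * c - b - c < m) : ∃ u v : ℕ, m = u * b + v * c := by
  have H := (frobeniusNumber_pair cop hb hc).2
  have hmem : m ∈ AddSubmonoid.closure ({b, c} : Set ℕ) := by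
    by_contra h
    exact absurd (H h) (not_le.mpr hm)
  obtain ⟨u, v, huv⟩ := (AddSubmonoid.mem_closure_pair b c m).mp hmem
  exact ⟨u, v, by simpa [smul_eq_mul] using huv.symm⟩

theorem frobenius_supersymmetric
    (a b c : ℕ) (ha : 2 ≤ a) (hab : a < b) (hbc : b < c)
    (cab : Nat.Coprime a b) (cac : Nat.Coprime a c) (cbc : Nat.Coprime b c) :
    IsGreatest {n : ℕ | ¬ ∃ u v w : ℕ, n = u * (a * b) + v * (a * c) + w * (b * c)}
      (2 * a * b * c - (a * b + a * c + b * c)) := by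
  have hb : 1 < b := lt_of_le_of_lt (by omega) hab
  have hc : 1 < c := lt_of_lt_of_le hb (le_of_lt hbc)
  have hs : a * b + a * c + b * c ≤ 2 * a * b * c := by
    have h1 : (a * b) * 4 ≤ (a * b) * c := mul_le_mul_right (by omega) (a * b)
    have h2 : (a * c) * 3 ≤ (a * c) * b := mul_le_mul_right (by omega) (a * c)
    have h3 : (b * c) * 2 ≤ (b * c) * a := mul_le_mul_right (by omega) (b * c)
    linarith [Nat.zero_le (a * b * c)]
  constructor
  · -- F is not representable
    rintro ⟨u, v, w, h⟩
    zify [hs] at h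
    -- a ∣ w + 1
    have hdvda : (a : ℤ) ∣ ((w : ℤ) + 1) * ((b : ℤ) * c) :=
      ⟨2 * b * c - b - c - u * b - v * c, by linear_combination -h⟩
    have hwa : a ∣ (w + 1) := by
      have : a ∣ (w + 1) * (b * c) := by
        have := hdvda
        zify
        push_cast
        exact_mod_cast this
      exact (cab.mul_right cac).dvd_of_dvd_mul_right this
    -- b ∣ v + 1
    have hdvdb : (b : ℤ) ∣ ((v : ℤ) + 1) * ((a : ℤ) * c) :=
      ⟨2 * a * c - a - c - u * a - w * c, by linear_combination -h⟩
    have hvb : b ∣ (v + 1) := by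
      have : b ∣ (v + 1) * (a * c) := by zify; push_cast; exact_mod_cast hdvdb
      exact ((cab.symm).mul_right cbc).dvd_of_dvd_mul_right this
    -- c ∣ u + 1
    have hdvdc : (c : ℤ) ∣ ((u : ℤ) + 1) * ((a : ℤ) * b) :=
      ⟨2 * a * b - a - b - v * a - w * b, by linear_combination -h⟩
    have huc : c ∣ (u + 1) := by
      have : c ∣ (u + 1) * (a * b) := by zify; push_cast; exact_mod_cast hdvdc
      exact ((cac.symm).mul_right cbc.symm).dvd_of_dvd_mul_right this
    have hwa' : a ≤ w + 1 := Nat.le_of_dvd (by omega) hwa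
    have hvb' : b ≤ v + 1 := Nat.le_of_dvd (by omega) hvb
    have huc' : c ≤ u + 1 := Nat.le_of_dvd (by omega) huc
    have hwa'' : (a : ℤ) ≤ (w : ℤ) + 1 := by exact_mod_cast hwa'
    have hvb'' : (b : ℤ) ≤ (v : ℤ) + 1 := by exact_mod_cast hvb'
    have huc'' : (c : ℤ) ≤ (u : ℤ) + 1 := by exact_mod_cast huc'
    have habp : (0 : ℤ) < (a : ℤ) * b := by positivity
    have hacp : (0 : ℤ) < (a : ℤ) * c := by positivity
    have hbcp : (0 : ℤ) < (b : ℤ) * c := by positivity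
    nlinarith [mul_le_mul_of_nonneg_right huc'' (le_of_lt habp),
      mul_le_mul_of_nonneg_right hvb'' (le_of_lt hacp),
      mul_le_mul_of_nonneg_right hwa'' (le_of_lt hbcp),
      mul_pos (mul_pos (show (0:ℤ) < a by positivity) (show (0:ℤ) < b by positivity))
        (show (0:ℤ) < c by positivity)]
  · -- upper bound
    intro n hn
    by_contra hcon
    push_neg at hcon
    apply hn
    have hn' : 2 * a * b * c < a * b + a * c + b * c + n :=
      by have := (Nat.sub_lt_iff_lt_add hs).mp hcon; omega
    have hbc' : b + c ≤ b * c := by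
      have h5 : 3 * c ≤ b * c := Nat.mul_le_mul_right c (by omega)
      linarith
    have h4 : a * (b + c) ≤ a * (b * c) := mul_le_mul_right hbc' a
    haveI : NeZero a := ⟨by omega⟩
    set w : ℕ := ((n : ZMod a) * ((b * c : ℕ) : ZMod a)⁻¹).val with hw_def
    have hwlt : w < a := ZMod.val_lt _
    have hcong : ((w * (b * c) : ℕ) : ZMod a) = (n : ZMod a) := by
      have h1 : ((w : ℕ) : ZMod a) = (n : ZMod a) * ((b * c : ℕ) : ZMod a)⁻¹ :=
        ZMod.natCast_rightInverse _
      have h2 : ((b * c : ℕ) : ZMod a) * ((b * c : ℕ) : ZMod a)⁻¹ = 1 :=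
        ZMod.coe_mul_inv_eq_one _ ((cab.mul_right cac).symm)
      push_cast
      push_cast at h1
      rw [h1]
      calc (n : ZMod a) * ((b : ZMod a) * c)⁻¹ * ((b : ZMod a) * c)
          = (n : ZMod a) * (((b : ZMod a) * c) * ((b : ZMod a) * c)⁻¹) := by ring
        _ = (n : ZMod a) := by
            have : ((b : ZMod a) * c) * ((b : ZMod a) * c)⁻¹ = 1 := by
              push_cast at h2; exact h2
            rw [this, mul_one]
    have hmod : w * (b * c) ≡ n [MOD a] := (ZMod.natCast_eq_natCast_iff _ _ _).mp hcong
    have hw1 : w + 1 ≤ a := hwlt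
    have hwbc : (w + 1) * (b * c) ≤ a * (b * c) := Nat.mul_le_mul_right _ hw1
    have hle : w * (b * c) ≤ n := by linarith [hwbc, h4, hn']
    obtain ⟨m, hm⟩ := (Nat.modEq_iff_dvd' hle).mp hmod
    have heq : n = a * m + w * (b * c) := Nat.eq_add_of_sub_eq hle hm
    have hmul : a * (b * c) < a * (m + b + c) := by linarith [hn', heq, hwbc]
    have hlt : b * c < m + b + c := by
      have := Nat.lt_of_mul_lt_mul_left hmul
      omega
    have hm_big : b * c - b - c < m := by omega
    obtain ⟨u, v, huv⟩ := two_gen_rep hb hc cbc hm_big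
    exact ⟨u, v, w, by rw [heq, huv]; ring⟩
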